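/- Let f : ℝ → ℂ satisfy: f ∈ C², f', f'' ∈ L¹(ℝ), and |f(x)| ≤ M/(1+|x|)^α for some M > 0, α > 1. Define Ξ_f(x) = Θ_f(x) − f(0)·1_{x>1} − f̂(0)/x for x > 0, where Θ_f(x) = ∑_{k∈ℤ} f(kx). Then there is a constant C depending only on f such that |Ξ_f(x)| ≤ C · min(x, 1/x) for all x > 0. -/

import Mathlib

open Real MeasureTheory Filter Set
open FourierTransform Complex

lemma XiAux.fourier_scale (f : ℝ → ℂ) {x : ℝ} (hx : 0 < x) (ξ : ℝ) :
    𝓕 (fun y ↦ f (x * y)) ξ = (x⁻¹ : ℂ) * 𝓕 f (ξ / x) := by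
  have hx0 : x ≠ 0 := ne_of_gt hx
  rw [Real.fourier_real_eq, Real.fourier_real_eq]
  have : (∫ v : ℝ, 𝐞 (-(v * ξ)) • f (x * v))
      = ∫ v : ℝ, (fun u ↦ 𝐞 (-(u * (ξ / x))) • f u) (x * v) := by
    congr 1 with v
    congr 2
    field_simp
  rw [this, MeasureTheory.Measure.integral_comp_mul_left (fun u ↦ 𝐞 (-(u * (ξ / x))) • f u) x,
    abs_of_pos (inv_pos.mpr hx)]
  rw [Complex.real_smul]
  push_cast
  ring

lemma XiAux.fourier_zero_eq (f : ℝ → ℂ) : 𝓕 f 0 = ∫ y : ℝ, f y := by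
  simp [Real.fourier_real_eq]

lemma XiAux.f_integrable (f : ℝ → ℂ) (hc : Continuous f) (M α : ℝ) (hα : 1 < α)
    (hbound : ∀ x : ℝ, ‖f x‖ ≤ M / (1 + |x|) ^ α) : Integrable f := by
  have h1 : Integrable (fun x : ℝ ↦ (1 + ‖x‖) ^ (-α)) :=
    integrable_one_add_norm (by simpa using hα)
  refine (h1.const_mul M).mono' hc.aestronglyMeasurable (Filter.Eventually.of_forall fun x ↦ ?_)
  have := hbound x
  rw [div_eq_mul_inv, ← Real.rpow_neg (by positivity)] at this
  simpa [Real.norm_eq_abs,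
    _root_.abs_of_nonneg (Real.rpow_nonneg (by positivity : (0:ℝ) ≤ 1 + |x|) (-α))] using this

lemma XiAux.fdecay (f : ℝ → ℂ) (hf : ContDiff ℝ 2 f) (hfi : Integrable f)
    (hf' : Integrable (deriv f)) (hf'' : Integrable (deriv (deriv f)))
    {ξ : ℝ} (hξ : ξ ≠ 0) :
    ‖𝓕 f ξ‖ ≤ ((∫ y : ℝ, ‖deriv (deriv f) y‖) / (4 * π ^ 2)) * |ξ| ^ (-(2:ℝ)) := by
  have hf2 : ContDiff ℝ (1 + 1) f := hf.of_le (by norm_num)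
  rw [contDiff_succ_iff_deriv] at hf2
  have hd1 : Differentiable ℝ f := hf2.1
  have hd2 : Differentiable ℝ (deriv f) := hf2.2.2.differentiable one_ne_zero
  have e1 : 𝓕 (deriv f) = fun ξ : ℝ ↦ (2 * π * I * ξ) • 𝓕 f ξ :=
    Real.fourier_deriv hfi hd1 hf'
  have e2 : 𝓕 (deriv (deriv f)) = fun ξ : ℝ ↦ (2 * π * I * ξ) • 𝓕 (deriv f) ξ :=
    Real.fourier_deriv hf' hd2 hf''
  have key : ‖𝓕 (deriv (deriv f)) ξ‖ = (2 * π * |ξ|) ^ 2 * ‖𝓕 f ξ‖ := by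
    rw [e2, e1]
    simp only [smul_smul, smul_eq_mul, norm_mul]
    simp only [norm_mul, Complex.norm_ofNat, Complex.norm_real, Complex.norm_I, Real.norm_eq_abs,
      _root_.abs_of_pos pi_pos]
    ring
  have hb : (2 * π * |ξ|) ^ 2 * ‖𝓕 f ξ‖ ≤ ∫ y : ℝ, ‖deriv (deriv f) y‖ := by
    rw [← key]; exact VectorFourier.norm_fourierIntegral_le_integral_norm _ _ _ _ _
  have hξ2 : (0:ℝ) < (2 * π * |ξ|) ^ 2 := by
    have : (0:ℝ) < |ξ| := abs_pos.mpr hξ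
    positivity
  have heq : ((∫ y : ℝ, ‖deriv (deriv f) y‖) / (4 * π ^ 2)) * |ξ| ^ (-(2:ℝ))
      = (∫ y : ℝ, ‖deriv (deriv f) y‖) / ((2 * π * |ξ|) ^ 2) := by
    rw [Real.rpow_neg (abs_nonneg ξ), show ((2:ℝ)) = ((2:ℕ):ℝ) by norm_num,
      Real.rpow_natCast]
    rw [← div_eq_mul_inv, div_div]
    congr 1
    push_cast
    ring
  rw [heq, le_div_iff₀ hξ2]
  linarith [hb]

lemma XiAux.pt_bound (f : ℝ → ℂ) (M α : ℝ) (hM : 0 < M) (hα : 1 < α)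
    (hbound : ∀ x : ℝ, ‖f x‖ ≤ M / (1 + |x|) ^ α) {x y : ℝ} (hx : 0 < x) (hy : y ≠ 0) :
    ‖f (y * x)‖ ≤ M * x ^ (-α) * |y| ^ (-α) := by
  have h0 : 0 < |y| := abs_pos.mpr hy
  have h1 : (0:ℝ) < |y| * x := by positivity
  have h2 : (|y| * x) ^ α ≤ (1 + |y * x|) ^ α := by
    apply Real.rpow_le_rpow h1.le _ (by linarith)
    rw [abs_mul, abs_of_pos hx]; linarith
  have h3 : (0:ℝ) < (|y| * x) ^ α := Real.rpow_pos_of_pos h1 α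
  calc ‖f (y * x)‖ ≤ M / (1 + |y * x|) ^ α := hbound _
    _ ≤ M / (|y| * x) ^ α := div_le_div_of_nonneg_left hM.le h3 h2
    _ = M * x ^ (-α) * |y| ^ (-α) := by
        rw [Real.mul_rpow (abs_nonneg y) hx.le, Real.rpow_neg hx.le,
          Real.rpow_neg (abs_nonneg y), div_eq_mul_inv, mul_inv]
        ring

lemma XiAux.summable_ite_rpow {e : ℝ} (he : 1 < e) :
    Summable (fun k : ℤ ↦ if k = 0 then (0:ℝ) else |(k:ℝ)| ^ (-e)) := by
  apply Summable.of_nonneg_of_le _ _ (Real.summable_abs_int_rpow he)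
  · intro k; split <;> positivity
  · intro k; split
    · exact Real.rpow_nonneg (abs_nonneg _) _
    · exact le_rfl

lemma XiAux.norm_tsum_ite_le (h : ℤ → ℂ) (D e : ℝ) (he : 1 < e)
    (hb : ∀ k : ℤ, k ≠ 0 → ‖h k‖ ≤ D * |(k:ℝ)| ^ (-e)) :
    ‖∑' k : ℤ, (if k = 0 then 0 else h k)‖
      ≤ D * ∑' k : ℤ, (if k = 0 then (0:ℝ) else |(k:ℝ)| ^ (-e)) := by
  have hs := XiAux.summable_ite_rpow he
  have hhs : HasSum (fun k : ℤ ↦ if k = 0 then (0:ℝ) else D * |(k:ℝ)| ^ (-e))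
      (D * ∑' k : ℤ, (if k = 0 then (0:ℝ) else |(k:ℝ)| ^ (-e))) := by
    have := hs.hasSum.mul_left D
    convert this using 2 with k
    case e'_3 => rfl
    split <;> simp
  refine tsum_of_norm_bounded hhs fun k ↦ ?_
  split
  · simp
  · next hk => exact hb k hk

lemma XiAux.summable_f_scaled (f : ℝ → ℂ) (M α : ℝ) (hM : 0 < M) (hα : 1 < α)
    (hbound : ∀ x : ℝ, ‖f x‖ ≤ M / (1 + |x|) ^ α) {x : ℝ} (hx : 0 < x) :
    Summable fun k : ℤ ↦ f (k * x) := by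
  apply summable_of_isBigO (Real.summable_abs_int_rpow hα)
  rw [Asymptotics.isBigO_iff]
  refine ⟨M * x ^ (-α), ?_⟩
  have hev : ∀ᶠ k : ℤ in cofinite, k ≠ 0 := by
    rw [Filter.eventually_cofinite]
    simpa using Set.finite_singleton (0:ℤ)
  filter_upwards [hev] with k hk
  have hk' : ((k:ℝ)) ≠ 0 := Int.cast_ne_zero.mpr hk
  calc ‖f (k * x)‖ ≤ M * x ^ (-α) * |(k:ℝ)| ^ (-α) :=
        XiAux.pt_bound f M α hM hα hbound hx hk'
    _ ≤ M * x ^ (-α) * ‖|(k:ℝ)| ^ (-α)‖ := by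
        rw [Real.norm_eq_abs, _root_.abs_of_nonneg (Real.rpow_nonneg (abs_nonneg _) _)]

/-- `Ξ_f(x) = Θ_f(x) - f(0)·1_{x>1} - f̂(0)/x`, where `Θ_f(x) = ∑_{k∈ℤ} f(kx)`
and `f̂(0) = ∫ f`. -/
noncomputable def Xi (f : ℝ → ℂ) (x : ℝ) : ℂ :=
  (∑' k : ℤ, f (k * x)) - (if 1 < x then f 0 else 0) - (∫ y : ℝ, f y) / (x : ℂ)

theorem xi_bound (f : ℝ → ℂ) (hf : ContDiff ℝ 2 f)
    (hf' : Integrable (deriv f)) (hf'' : Integrable (deriv (deriv f)))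
    (M α : ℝ) (hM : 0 < M) (hα : 1 < α)
    (hbound : ∀ x : ℝ, ‖f x‖ ≤ M / (1 + |x|) ^ α) :
    ∃ C : ℝ, 0 < C ∧ ∀ x : ℝ, 0 < x → ‖Xi f x‖ ≤ C * min x (1 / x) := by
  have hfi : Integrable f := XiAux.f_integrable f hf.continuous M α hα hbound
  set B : ℝ := ∫ y : ℝ, ‖deriv (deriv f) y‖ with hB
  have hB0 : 0 ≤ B := integral_nonneg fun y ↦ norm_nonneg _
  set Zα : ℝ := ∑' k : ℤ, (if k = 0 then (0:ℝ) else |(k:ℝ)| ^ (-α)) with hZα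
  set Z2 : ℝ := ∑' k : ℤ, (if k = 0 then (0:ℝ) else |(k:ℝ)| ^ (-(2:ℝ))) with hZ2
  have hZα0 : 0 ≤ Zα := tsum_nonneg fun k ↦ by split <;> positivity
  have hZ20 : 0 ≤ Z2 := tsum_nonneg fun k ↦ by split <;> positivity
  set C : ℝ := M * Zα + ‖f 0‖ + ‖∫ y : ℝ, f y‖ + (B / (4 * π ^ 2)) * Z2 + 1 with hC
  have hπ : (0:ℝ) < 4 * π ^ 2 := by positivity
  have hC0 : 0 < C := by
    have h1 : 0 ≤ M * Zα := mul_nonneg hM.le hZα0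
    have h2 : 0 ≤ (B / (4 * π ^ 2)) * Z2 := mul_nonneg (div_nonneg hB0 hπ.le) hZ20
    have h3 : 0 ≤ ‖f 0‖ := norm_nonneg _
    have h4 : 0 ≤ ‖∫ y : ℝ, f y‖ := norm_nonneg _
    rw [hC]
    linarith
  refine ⟨C, hC0, fun x hx ↦ ?_⟩
  rcases le_or_gt 1 x with hx1 | hx1
  · -- x ≥ 1 : direct estimate
    have hmin : min x (1 / x) = x⁻¹ := by
      rw [one_div]
      apply min_eq_right
      calc x⁻¹ ≤ 1 := inv_le_one_of_one_le₀ hx1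
        _ ≤ x := hx1
    have hsum := XiAux.summable_f_scaled f M α hM hα hbound hx
    have hsplit : (∑' k : ℤ, f (k * x))
        = f 0 + ∑' k : ℤ, (if k = 0 then 0 else f (k * x)) := by
      have := Summable.tsum_eq_add_tsum_ite hsum 0
      simpa using this
    set T : ℂ := ∑' k : ℤ, (if k = 0 then 0 else f (k * x)) with hT
    have hTb : ‖T‖ ≤ (M * x ^ (-α)) * Zα := by
      refine XiAux.norm_tsum_ite_le _ _ _ hα fun k hk ↦ ?_
      exact XiAux.pt_bound f M α hM hα hbound hx (Int.cast_ne_zero.mpr hk)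
    have hXi : Xi f x = T + ((f 0 - (if 1 < x then f 0 else 0)) - (∫ y : ℝ, f y) / (x : ℂ)) := by
      rw [Xi, hsplit]
      ring
    have h1 : ‖f 0 - (if 1 < x then f 0 else 0)‖ ≤ ‖f 0‖ * x⁻¹ := by
      split_ifs with h
      · simp
        positivity
      · have hx1' : x = 1 := le_antisymm (not_lt.mp h) hx1
        simp [hx1']
    have h2 : ‖(∫ y : ℝ, f y) / (x : ℂ)‖ = ‖∫ y : ℝ, f y‖ * x⁻¹ := by
      rw [norm_div, Complex.norm_real, Real.norm_eq_abs, abs_of_pos hx, div_eq_mul_inv]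
    have hxα : x ^ (-α) ≤ x⁻¹ := by
      rw [← Real.rpow_neg_one x]
      exact Real.rpow_le_rpow_of_exponent_le hx1 (by linarith)
    have hTb' : ‖T‖ ≤ (M * Zα) * x⁻¹ := by
      calc ‖T‖ ≤ (M * x ^ (-α)) * Zα := hTb
        _ = (M * Zα) * x ^ (-α) := by ring
        _ ≤ (M * Zα) * x⁻¹ :=
            mul_le_mul_of_nonneg_left hxα (mul_nonneg hM.le hZα0)
    calc ‖Xi f x‖ ≤ ‖T‖ + (‖f 0 - (if 1 < x then f 0 else 0)‖ + ‖(∫ y : ℝ, f y) / (x : ℂ)‖) := by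
          rw [hXi]
          exact (norm_add_le _ _).trans (by gcongr; exact norm_sub_le _ _)
      _ ≤ (M * Zα) * x⁻¹ + (‖f 0‖ * x⁻¹ + ‖∫ y : ℝ, f y‖ * x⁻¹) := by
          rw [h2]; gcongr
      _ ≤ C * min x (1 / x) := by
          rw [hmin, hC]
          have hxinv : 0 ≤ x⁻¹ := by positivity
          have h5 : 0 ≤ (B / (4 * π ^ 2)) * Z2 := mul_nonneg (div_nonneg hB0 hπ.le) hZ20
          nlinarith
  · -- x < 1 : Poisson summation
    have hmin : min x (1 / x) = x := by
      apply min_eq_left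
      rw [le_div_iff₀ hx]
      nlinarith
    set g : ℝ → ℂ := fun y ↦ f (x * y) with hg
    have hgc : Continuous g := hf.continuous.comp (continuous_const.mul continuous_id)
    set b : ℝ := min α 2 with hb
    have hb1 : 1 < b := lt_min hα one_lt_two
    have hev : ∀ᶠ y : ℝ in cocompact ℝ, 1 ≤ |y| := by
      rw [Filter.eventually_iff]
      apply Filter.mem_cocompact.mpr
      refine ⟨Icc (-1) 1, isCompact_Icc, fun y hy ↦ ?_⟩
      simp only [mem_compl_iff, mem_Icc, not_and_or, not_le] at hy
      rcases hy with h | h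
      · exact le_abs.mpr (Or.inr (by linarith : (1:ℝ) ≤ -y))
      · exact le_abs.mpr (Or.inl h.le)
    have hgO : g =O[cocompact ℝ] (fun y : ℝ ↦ |y| ^ (-b)) := by
      rw [Asymptotics.isBigO_iff]
      refine ⟨M * x ^ (-α), ?_⟩
      filter_upwards [hev] with y hy
      have hy0 : y ≠ 0 := by intro h; rw [h] at hy; simp at hy; linarith
      have h1 : ‖g y‖ ≤ M * x ^ (-α) * |y| ^ (-α) := by
        rw [hg]
        simpa [mul_comm] using XiAux.pt_bound f M α hM hα hbound hx hy0
      have h2 : |y| ^ (-α) ≤ |y| ^ (-b) :=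
        Real.rpow_le_rpow_of_exponent_le hy (by simp [hb, neg_le_neg_iff, min_le_left])
      calc ‖g y‖ ≤ M * x ^ (-α) * |y| ^ (-α) := h1
        _ ≤ M * x ^ (-α) * |y| ^ (-b) := by
            apply mul_le_mul_of_nonneg_left h2; positivity
        _ ≤ M * x ^ (-α) * ‖|y| ^ (-b)‖ := by
            rw [Real.norm_eq_abs, _root_.abs_of_nonneg (Real.rpow_nonneg (abs_nonneg _) _)]
    have hgFval : ∀ ξ : ℝ, 𝓕 g ξ = (x⁻¹ : ℂ) * 𝓕 f (ξ / x) :=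
      fun ξ ↦ XiAux.fourier_scale f hx ξ
    have hgFb : ∀ ξ : ℝ, ξ ≠ 0 → ‖𝓕 g ξ‖ ≤ (B / (4 * π ^ 2) * x) * |ξ| ^ (-(2:ℝ)) := by
      intro ξ hξ
      have hξx : ξ / x ≠ 0 := div_ne_zero hξ (ne_of_gt hx)
      have h1 : ‖𝓕 g ξ‖ = x⁻¹ * ‖𝓕 f (ξ / x)‖ := by
        rw [hgFval ξ, norm_mul]
        congr 1
        rw [norm_inv, Complex.norm_real, Real.norm_eq_abs, abs_of_pos hx]
      have h2 := XiAux.fdecay f hf hfi hf' hf'' hξx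
      have h3 : |ξ / x| ^ (-(2:ℝ)) = |ξ| ^ (-(2:ℝ)) * x ^ (2:ℝ) := by
        rw [abs_div, abs_of_pos hx, Real.div_rpow (abs_nonneg ξ) hx.le,
          Real.rpow_neg hx.le, div_eq_mul_inv, inv_inv]
      rw [h1]
      calc x⁻¹ * ‖𝓕 f (ξ / x)‖ ≤ x⁻¹ * ((B / (4 * π ^ 2)) * (|ξ| ^ (-(2:ℝ)) * x ^ (2:ℝ))) := by
            rw [← h3]
            apply mul_le_mul_of_nonneg_left (h2.trans_eq rfl) (by positivity)
        _ = (B / (4 * π ^ 2) * x) * |ξ| ^ (-(2:ℝ)) := by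
            rw [Real.rpow_two]
            field_simp
    have hgF : (𝓕 g) =O[cocompact ℝ] (fun y : ℝ ↦ |y| ^ (-b)) := by
      rw [Asymptotics.isBigO_iff]
      refine ⟨B / (4 * π ^ 2) * x, ?_⟩
      filter_upwards [hev] with ξ hξ
      have hξ0 : ξ ≠ 0 := by intro h; rw [h] at hξ; simp at hξ; linarith
      have h2 : |ξ| ^ (-(2:ℝ)) ≤ |ξ| ^ (-b) :=
        Real.rpow_le_rpow_of_exponent_le hξ (by simp [hb, neg_le_neg_iff, min_le_right])
      calc ‖𝓕 g ξ‖ ≤ (B / (4 * π ^ 2) * x) * |ξ| ^ (-(2:ℝ)) := hgFb ξ hξ0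
        _ ≤ (B / (4 * π ^ 2) * x) * |ξ| ^ (-b) := by
            apply mul_le_mul_of_nonneg_left h2; positivity
        _ ≤ (B / (4 * π ^ 2) * x) * ‖|ξ| ^ (-b)‖ := by
            rw [Real.norm_eq_abs, _root_.abs_of_nonneg (Real.rpow_nonneg (abs_nonneg _) _)]
    have hpoisson := Real.tsum_eq_tsum_fourier_of_rpow_decay hgc hb1 hgO hgF 0
    have hΘ : (∑' k : ℤ, f (↑k * x)) = ∑' n : ℤ, 𝓕 g ↑n := by
      have h1 : (∑' k : ℤ, f (↑k * x)) = ∑' n : ℤ, g (0 + ↑n) :=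
        tsum_congr fun k ↦ by rw [hg]; simp [mul_comm]
      rw [h1, hpoisson]
      apply tsum_congr
      intro n
      rw [show ((0:ℝ) : UnitAddCircle) = 0 by norm_cast, fourier_eval_zero, mul_one]
    have hsumF : Summable fun n : ℤ ↦ 𝓕 g ↑n :=
      summable_of_isBigO (Real.summable_abs_int_rpow hb1)
        (hgF.comp_tendsto Int.tendsto_coe_cofinite)
    have hsplitF : (∑' n : ℤ, 𝓕 g ↑n)
        = 𝓕 g 0 + ∑' n : ℤ, (if n = 0 then 0 else 𝓕 g ↑n) := by
      have := Summable.tsum_eq_add_tsum_ite hsumF 0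
      simpa using this
    have hg0 : 𝓕 g 0 = (∫ y : ℝ, f y) / (x : ℂ) := by
      rw [hgFval 0, zero_div, XiAux.fourier_zero_eq, div_eq_mul_inv, mul_comm]
    have hXi : Xi f x = ∑' n : ℤ, (if n = 0 then 0 else 𝓕 g ↑n) := by
      rw [Xi, if_neg (by linarith : ¬ (1:ℝ) < x), hΘ, hsplitF, hg0]
      ring
    have hmain : ‖Xi f x‖ ≤ (B / (4 * π ^ 2) * x) * Z2 := by
      rw [hXi, hZ2]
      refine XiAux.norm_tsum_ite_le _ _ _ one_lt_two fun k hk ↦ ?_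
      exact hgFb k (Int.cast_ne_zero.mpr hk)
    calc ‖Xi f x‖ ≤ (B / (4 * π ^ 2) * x) * Z2 := hmain
      _ = (B / (4 * π ^ 2) * Z2) * x := by ring
      _ ≤ C * x := by
          apply mul_le_mul_of_nonneg_right _ hx.le
          have h1 : 0 ≤ M * Zα := mul_nonneg hM.le hZα0
          have h3 : 0 ≤ ‖f 0‖ := norm_nonneg _
          have h4 : 0 ≤ ‖∫ y : ℝ, f y‖ := norm_nonneg _
          rw [hC]
          linarith
      _ = C * min x (1 / x) := by rw [hmin]
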